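/- arXiv:1710.06008 — 3 statements merged into one kernel-verified Lean document; each statement's English description precedes it below -/
import Mathlib

section
/- Let Z be a symmetric positive semidefinite N×N matrix with nonnegative entries such that Z 1_N = 1_N and Tr(Z) = k, and suppose Z is block diagonal with respect to a partition of {1,...,N} into k blocks (i.e., Z_{ij} = 0 whenever i and j lie in different blocks). Then each diagonal block of Z equals (1/n_a) J_{n_a×n_a}, where n_a is the size of block a and J is the all-ones matrix; in particular Z = sum_a (1/n_a) 1_{Γ_a} 1_{Γ_a}^T. -/
open scoped BigOperators Matrix

/-- If a symmetric PSD entrywise-nonnegative matrix `Z` with row sums one and trace `k`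
is block diagonal with respect to a partition of `{1, ..., N}` into `k` nonempty blocks
(given by the fibers of `g`), then each diagonal block equals `(1/n_a) J`, i.e.
`Z = ∑_a (1/n_a) 1_{Γ_a} 1_{Γ_a}ᵀ`. -/
theorem block_diagonal_doubly_stochastic_psd_eq_cluster_matrix
    {N k : ℕ} (g : Fin N → Fin k) (hg : Function.Surjective g)
    (Z : Matrix (Fin N) (Fin N) ℝ)
    (hpsd : Z.PosSemidef)
    (hnonneg : ∀ i j, 0 ≤ Z i j)
    (hrow : Z *ᵥ (fun _ => (1 : ℝ)) = fun _ => (1 : ℝ))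
    (htr : Z.trace = k)
    (hblock : ∀ i j, g i ≠ g j → Z i j = 0) :
    ∀ i j, Z i j =
      if g i = g j then ((Finset.univ.filter (fun l => g l = g i)).card : ℝ)⁻¹ else 0 := by
  classical
  set c : Fin k → ℝ := fun a => ((Finset.univ.filter (fun l => g l = a)).card : ℝ) with hc
  have hcpos : ∀ a, 0 < c a := by
    intro a
    obtain ⟨i, hi⟩ := hg a
    have : i ∈ Finset.univ.filter (fun l => g l = a) := by simp [hi]
    have := Finset.card_pos.mpr ⟨i, this⟩
    simp only [hc]
    exact_mod_cast this
  set P : Matrix (Fin N) (Fin N) ℝ :=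
    Matrix.of (fun i j => if g i = g j then (c (g i))⁻¹ else 0) with hP
  -- row sums of Z are 1
  have hZrow : ∀ i, ∑ j, Z i j = 1 := by
    intro i
    have := congrFun hrow i
    simpa [Matrix.mulVec, dotProduct] using this
  -- fiber row sums
  have hfibsum : ∀ i (a : Fin k),
      ∑ l ∈ Finset.univ.filter (fun l => g l = a), Z i l = if g i = a then 1 else 0 := by
    intro i a
    by_cases h : g i = a
    · rw [if_pos h, ← hZrow i]
      apply Finset.sum_subset (Finset.filter_subset _ _)
      intro x _ hx
      apply hblock
      simp only [Finset.mem_filter, Finset.mem_univ, true_and] at hx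
      rw [h]; exact fun hgx => hx hgx.symm
    · rw [if_neg h]
      apply Finset.sum_eq_zero
      intro x hx
      simp only [Finset.mem_filter, Finset.mem_univ, true_and] at hx
      exact hblock i x (by rw [hx]; exact h)
  -- Z * P = P
  have hZP : Z * P = P := by
    ext i j
    have : (Z * P) i j = ∑ l, Z i l * (if g l = g j then (c (g j))⁻¹ else 0) := by
      simp only [Matrix.mul_apply, hP, Matrix.of_apply]
      refine Finset.sum_congr rfl fun l _ => ?_
      by_cases h : g l = g j <;> simp [h]
    rw [this]
    have : ∑ l, Z i l * (if g l = g j then (c (g j))⁻¹ else 0)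
        = (∑ l ∈ Finset.univ.filter (fun l => g l = g j), Z i l) * (c (g j))⁻¹ := by
      rw [Finset.sum_mul, ← Finset.sum_filter_of_ne (p := fun l => g l = g j)]
      · refine Finset.sum_congr rfl fun l hl => ?_
        simp only [Finset.mem_filter] at hl
        simp [hl.2]
      · intro l _ h
        by_contra hgl
        simp [hgl] at h
    rw [this, hfibsum i (g j)]
    by_cases h : g i = g j <;> simp [hP, h]
  -- P is symmetric
  have hPsymm : Pᵀ = P := by
    ext i j
    simp only [Matrix.transpose_apply, hP, Matrix.of_apply]
    by_cases h : g i = g j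
    · rw [if_pos h, if_pos h.symm, h]
    · rw [if_neg h, if_neg (fun hh => h hh.symm)]
  -- P * Z = P
  have hPZ : P * Z = P := by
    have hZsymm : Zᵀ = Z := hpsd.1.eq ▸ by
      ext i j; simp [Matrix.conjTranspose_apply] at *
      have := congrFun (congrFun hpsd.1.eq j) i
      simpa [Matrix.conjTranspose_apply] using this
    calc P * Z = (Zᵀ * Pᵀ)ᵀ := by rw [← Matrix.transpose_mul, Matrix.transpose_transpose]
    _ = (Z * P)ᵀ := by rw [hZsymm, hPsymm]
    _ = P := by rw [hZP, hPsymm]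
  -- P * P = P
  have hPP : P * P = P := by
    ext i j
    simp only [Matrix.mul_apply, hP, Matrix.of_apply]
    by_cases h : g i = g j
    · rw [if_pos h]
      have : ∀ l : Fin N, (if g i = g l then (c (g i))⁻¹ else 0) *
          (if g l = g j then (c (g l))⁻¹ else 0)
          = if g l = g i then (c (g i))⁻¹ * (c (g i))⁻¹ else 0 := by
        intro l
        by_cases hl : g l = g i
        · rw [if_pos hl.symm, if_pos (hl.trans h), if_pos hl, hl]
        · have hl2 : ¬ g i = g l := fun hh => hl hh.symm
          rw [if_neg hl2, if_neg hl, zero_mul]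
      rw [Finset.sum_congr rfl (fun l _ => this l), ← Finset.sum_filter,
        Finset.sum_const, nsmul_eq_mul]
      have hcard : ((Finset.filter (fun l => g l = g i) Finset.univ).card : ℝ) = c (g i) := rfl
      rw [hcard]
      have h0 : c (g i) ≠ 0 := (hcpos (g i)).ne'
      field_simp
    · rw [if_neg h]
      apply Finset.sum_eq_zero
      intro l _
      by_cases h1 : g i = g l
      · have h2 : ¬ g l = g j := fun hh => h (h1.trans hh)
        rw [if_neg h2, mul_zero]
      · rw [if_neg h1, zero_mul]
  -- Z - P is PSD
  have hconj : (1 - P) * Z * (1 - P)ᴴ = Z - P := by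
    have hPH : (1 - P)ᴴ = 1 - P := by
      have hPh : Pᴴ = P := by
        rw [← Matrix.transpose_transpose P, hPsymm]
        ext i j
        simp [Matrix.conjTranspose_apply, hPsymm]
      rw [Matrix.conjTranspose_sub, Matrix.conjTranspose_one, hPh]
    rw [hPH]
    have h1 : (1 - P) * Z = Z - P := by rw [Matrix.sub_mul, Matrix.one_mul, hPZ]
    rw [h1, Matrix.sub_mul, Matrix.mul_sub, Matrix.mul_one, Matrix.mul_sub, Matrix.mul_one,
      hZP, hPP]
    abel
  have hMpsd : (Z - P).PosSemidef := hconj ▸ hpsd.mul_mul_conjTranspose_same (1 - P)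
  -- trace P = k
  have htrP : P.trace = k := by
    have : P.trace = ∑ i, (c (g i))⁻¹ := by
      simp [Matrix.trace, Matrix.diag, hP]
    rw [this]
    have := Finset.sum_fiberwise_of_maps_to (s := (Finset.univ : Finset (Fin N)))
      (g := g) (t := (Finset.univ : Finset (Fin k)))
      (fun i _ => Finset.mem_univ (g i)) (fun i => (c (g i))⁻¹)
    rw [← this]
    have : ∀ a : Fin k, ∑ i ∈ Finset.univ.filter (fun i => g i = a), (c (g i))⁻¹ = 1 := by
      intro a
      have h1 : ∀ i ∈ Finset.univ.filter (fun i => g i = a), (c (g i))⁻¹ = (c a)⁻¹ := by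
        intro i hi
        simp only [Finset.mem_filter] at hi
        rw [hi.2]
      rw [Finset.sum_congr rfl h1, Finset.sum_const, nsmul_eq_mul]
      have hcard : ((Finset.filter (fun i => g i = a) Finset.univ).card : ℝ) = c a := rfl
      rw [hcard]
      field_simp [(hcpos a).ne']
    rw [Finset.sum_congr rfl (fun a _ => this a)]
    simp
  -- trace (Z - P) = 0, diag nonneg, so diag = 0
  have htrM : (Z - P).trace = 0 := by
    rw [Matrix.trace_sub, htr, htrP, sub_self]
  have hdiag_nonneg : ∀ i, 0 ≤ (Z - P) i i := by
    intro i
    have := hMpsd.dotProduct_mulVec_nonneg (Pi.single i 1)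
    simpa [dotProduct, Matrix.mulVec, Pi.single_apply, Finset.sum_ite_eq',
      Finset.sum_ite_eq] using this
  have hdiag : ∀ i, (Z - P) i i = 0 := by
    have h0 : ∑ i, (Z - P) i i = 0 := htrM
    intro i
    exact (Finset.sum_eq_zero_iff_of_nonneg (fun j _ => hdiag_nonneg j)).mp h0 i
      (Finset.mem_univ i)
  -- off diagonal: use x = e_i ± e_j
  have hMsymm : ∀ i j, (Z - P) j i = (Z - P) i j := by
    intro i j
    have := congrFun (congrFun hMpsd.1.eq j) i
    simpa [Matrix.conjTranspose_apply] using this.symm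
  have hoff : ∀ i j, (Z - P) i j = 0 := by
    intro i j
    by_cases hij : i = j
    · rw [hij]; exact hdiag j
    · have key : ∀ t : ℝ, 0 ≤ 2 * t * (Z - P) i j := by
        intro t
        have := hMpsd.dotProduct_mulVec_nonneg (Pi.single i t + Pi.single j 1)
        have hexp : dotProduct (star (Pi.single i t + Pi.single j (1:ℝ)))
            ((Z - P) *ᵥ (Pi.single i t + Pi.single j 1))
            = t * t * (Z - P) i i + t * (Z - P) i j + t * (Z - P) j i + (Z - P) j j := by
          rw [star_trivial, Matrix.mulVec_add, Matrix.mulVec_single, Matrix.mulVec_single,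
            add_dotProduct, single_dotProduct, single_dotProduct]
          simp only [Pi.add_apply, Pi.smul_apply, op_smul_eq_mul, Matrix.col_apply]
          ring
        rw [hexp, hdiag i, hdiag j, hMsymm i j] at this
        calc (0:ℝ) ≤ t * t * 0 + t * (Z - P) i j + t * (Z - P) i j + 0 := this
        _ = 2 * t * (Z - P) i j := by ring
      have h1 := key 1
      have h2 := key (-1)
      nlinarith [h1, h2]
  intro i j
  have := hoff i j
  have hz : Z i j = P i j := by linarith [sub_eq_zero.mp (by simpa [Matrix.sub_apply] using this)]
  rw [hz, hP]
  simp [Matrix.of_apply, hc]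
end

section
/- For any matrices X̄_1, ..., X̄_k with X̄_l ∈ R^{n_l × m}, form the block diagonal matrix X̂ ∈ R^{N × mk} with diagonal blocks X̄_l (N = sum n_l), and let W ∈ R^{mk × mk} be a k×k block matrix whose (a,b) block is an m×m orthogonal matrix for each a,b. Then ||X̂ W X̂^T|| ≤ (sum_{l=1}^k ||X̄_l||^2), where ||·|| denotes the operator (spectral) norm. -/
open scoped BigOperators Matrix Matrix.Norms.L2Operator

open Matrix Finset

private lemma dotSelf_nonneg {ι : Type*} [Fintype ι] (x : ι → ℝ) : 0 ≤ x ⬝ᵥ x :=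
  Finset.sum_nonneg fun _ _ => mul_self_nonneg _

private lemma norm_euclidean {ι : Type*} [Fintype ι] (y : ι → ℝ) :
    ‖(WithLp.equiv 2 (ι → ℝ)).symm y‖ = Real.sqrt (y ⬝ᵥ y) := by
  rw [EuclideanSpace.norm_eq]
  congr 1
  simp [dotProduct, Real.norm_eq_abs, sq_abs, pow_two]

private lemma dot_le_sqrt {ι : Type*} [Fintype ι] (x y : ι → ℝ) :
    x ⬝ᵥ y ≤ Real.sqrt (x ⬝ᵥ x) * Real.sqrt (y ⬝ᵥ y) := by
  have h := Finset.sum_mul_sq_le_sq_mul_sq Finset.univ x y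
  calc x ⬝ᵥ y ≤ |x ⬝ᵥ y| := le_abs_self _
    _ = Real.sqrt ((x ⬝ᵥ y) ^ 2) := (Real.sqrt_sq_eq_abs _).symm
    _ ≤ Real.sqrt ((∑ i, x i ^ 2) * ∑ i, y i ^ 2) := Real.sqrt_le_sqrt h
    _ = _ := by
        rw [Real.sqrt_mul (by positivity)]
        simp [dotProduct, pow_two]

private lemma orth_dot {m' : ℕ} (A : Matrix (Fin m') (Fin m') ℝ) (hA : Aᵀ * A = 1)
    (x : Fin m' → ℝ) : (A *ᵥ x) ⬝ᵥ (A *ᵥ x) = x ⬝ᵥ x := by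
  rw [Matrix.dotProduct_mulVec, ← Matrix.vecMul_transpose, Matrix.vecMul_vecMul, hA,
    Matrix.vecMul_one]

private lemma sqrt_dot_mulVec_le {a b : Type*} [Fintype a] [Fintype b] [DecidableEq a]
    [DecidableEq b] (A : Matrix a b ℝ) (x : b → ℝ) :
    Real.sqrt ((A *ᵥ x) ⬝ᵥ (A *ᵥ x)) ≤ ‖A‖ * Real.sqrt (x ⬝ᵥ x) := by
  have h := A.l2_opNorm_mulVec ((WithLp.equiv 2 (b → ℝ)).symm x)
  rw [show ((EuclideanSpace.equiv a ℝ).symm <| A *ᵥ ((WithLp.equiv 2 (b → ℝ)).symm x)) =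
      (WithLp.equiv 2 (a → ℝ)).symm (A *ᵥ x) from rfl, norm_euclidean, norm_euclidean] at h
  exact h

/-- If `X̂` is block diagonal with blocks `X̄_1, ..., X̄_k` and `W` is a `k × k` block
matrix whose `m × m` blocks are all orthogonal, then the spectral norm of
`X̂ W X̂ᵀ` is at most `∑ l, ‖X̄_l‖²`. -/
theorem blockDiagonal_conj_opNorm_le
    {k m : ℕ} (n : Fin k → ℕ)
    (Xbar : (l : Fin k) → Matrix (Fin (n l)) (Fin m) ℝ)
    (Xhat : Matrix ((l : Fin k) × Fin (n l)) (Fin k × Fin m) ℝ)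
    (hXhat : ∀ (a : Fin k) (i : Fin (n a)) (b : Fin k) (j : Fin m),
      Xhat ⟨a, i⟩ (b, j) = if h : a = b then Xbar a i j else 0)
    (W : Matrix (Fin k × Fin m) (Fin k × Fin m) ℝ)
    (hW : ∀ a b : Fin k,
      (Matrix.of (fun i j : Fin m => W (a, i) (b, j)))ᵀ *
        Matrix.of (fun i j : Fin m => W (a, i) (b, j)) = 1) :
    ‖Xhat * W * Xhatᵀ‖ ≤ ∑ l, ‖Xbar l‖ ^ 2 := by
  classical
  set S : ℝ := ∑ l, ‖Xbar l‖ ^ 2 with hSdef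
  have hS0 : 0 ≤ S := Finset.sum_nonneg fun l _ => by positivity
  -- blocks of Xhatᵀ *ᵥ u
  have hblock : ∀ (u : ((l : Fin k) × Fin (n l)) → ℝ) (b : Fin k),
      (fun j => (Xhatᵀ *ᵥ u) (b, j)) = (Xbar b)ᵀ *ᵥ fun i => u ⟨b, i⟩ := by
    intro u b
    funext j
    show ∑ x : (l : Fin k) × Fin (n l), Xhatᵀ (b, j) x * u x = _
    rw [← Finset.univ_sigma_univ, Finset.sum_sigma]
    rw [Finset.sum_eq_single b]
    · simp [Matrix.mulVec, dotProduct, hXhat, Matrix.transpose_apply, mul_comm]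
    · intro a _ hab
      simp [hXhat, Matrix.transpose_apply, hab]
    · simp
  -- block norms of a vector
  have sum_sq_blocks : ∀ u : ((l : Fin k) × Fin (n l)) → ℝ,
      (∑ a, Real.sqrt ((fun i => u ⟨a, i⟩) ⬝ᵥ fun i => u ⟨a, i⟩) ^ 2) = u ⬝ᵥ u := by
    intro u
    rw [show (u ⬝ᵥ u) = ∑ x : (l : Fin k) × Fin (n l), u x * u x from rfl, ← Finset.univ_sigma_univ, Finset.sum_sigma]
    refine Finset.sum_congr rfl fun a _ => ?_
    rw [Real.sq_sqrt (dotSelf_nonneg _)]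
    rfl
  -- bound on the sum of block norms of Xhatᵀ *ᵥ u
  have sum_blocks_le : ∀ u : ((l : Fin k) × Fin (n l)) → ℝ,
      (∑ a, Real.sqrt ((fun j => (Xhatᵀ *ᵥ u) (a, j)) ⬝ᵥ fun j => (Xhatᵀ *ᵥ u) (a, j))) ≤
        Real.sqrt S * Real.sqrt (u ⬝ᵥ u) := by
    intro u
    have step1 : ∀ a : Fin k,
        Real.sqrt ((fun j => (Xhatᵀ *ᵥ u) (a, j)) ⬝ᵥ fun j => (Xhatᵀ *ᵥ u) (a, j)) ≤
          ‖Xbar a‖ * Real.sqrt ((fun i => u ⟨a, i⟩) ⬝ᵥ fun i => u ⟨a, i⟩) := by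
      intro a
      rw [hblock u a]
      have := sqrt_dot_mulVec_le (Xbar a)ᵀ (fun i => u ⟨a, i⟩)
      rwa [show ((Xbar a)ᵀ : Matrix (Fin m) (Fin (n a)) ℝ) = (Xbar a)ᴴ from
        ((Xbar a).conjTranspose_eq_transpose_of_trivial).symm,
        Matrix.l2_opNorm_conjTranspose] at this
    calc _ ≤ ∑ a, ‖Xbar a‖ * Real.sqrt ((fun i => u ⟨a, i⟩) ⬝ᵥ fun i => u ⟨a, i⟩) :=
          Finset.sum_le_sum fun a _ => step1 a
      _ ≤ Real.sqrt S * Real.sqrt (u ⬝ᵥ u) := by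
          rw [← Real.sqrt_mul hS0]
          rw [Real.le_sqrt (Finset.sum_nonneg fun a _ =>
            mul_nonneg (norm_nonneg _) (Real.sqrt_nonneg _))
            (mul_nonneg hS0 (dotSelf_nonneg u))]
          calc (∑ a, ‖Xbar a‖ * Real.sqrt ((fun i => u ⟨a, i⟩) ⬝ᵥ fun i => u ⟨a, i⟩)) ^ 2 ≤
              (∑ a, ‖Xbar a‖ ^ 2) *
                ∑ a, Real.sqrt ((fun i => u ⟨a, i⟩) ⬝ᵥ fun i => u ⟨a, i⟩) ^ 2 :=
              Finset.sum_mul_sq_le_sq_mul_sq Finset.univ _ _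
            _ = S * (u ⬝ᵥ u) := by rw [sum_sq_blocks u]
  -- the key bilinear bound
  have key : ∀ u v : ((l : Fin k) × Fin (n l)) → ℝ,
      u ⬝ᵥ ((Xhat * W * Xhatᵀ) *ᵥ v) ≤ S * (Real.sqrt (u ⬝ᵥ u) * Real.sqrt (v ⬝ᵥ v)) := by
    intro u v
    have hrw : u ⬝ᵥ ((Xhat * W * Xhatᵀ) *ᵥ v) =
        (Xhatᵀ *ᵥ u) ⬝ᵥ (W *ᵥ (Xhatᵀ *ᵥ v)) := by
      rw [← Matrix.mulVec_mulVec, ← Matrix.mulVec_mulVec, Matrix.dotProduct_mulVec,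
        ← Matrix.mulVec_transpose]
    set p := Xhatᵀ *ᵥ u with hp
    set q := Xhatᵀ *ᵥ v with hq
    have expand : p ⬝ᵥ (W *ᵥ q) = ∑ a, ∑ b,
        (fun i => p (a, i)) ⬝ᵥ
          ((Matrix.of fun i j : Fin m => W (a, i) (b, j)) *ᵥ fun j => q (b, j)) := by
      simp only [dotProduct, Matrix.mulVec, Matrix.of_apply, Fintype.sum_prod_type,
        Finset.mul_sum]
      exact Finset.sum_congr rfl fun a _ => Finset.sum_comm
    have termbd : ∀ a b : Fin k,
        (fun i => p (a, i)) ⬝ᵥ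
            ((Matrix.of fun i j : Fin m => W (a, i) (b, j)) *ᵥ fun j => q (b, j)) ≤
          Real.sqrt ((fun i => p (a, i)) ⬝ᵥ fun i => p (a, i)) *
            Real.sqrt ((fun j => q (b, j)) ⬝ᵥ fun j => q (b, j)) := by
      intro a b
      calc _ ≤ Real.sqrt ((fun i => p (a, i)) ⬝ᵥ fun i => p (a, i)) *
            Real.sqrt (((Matrix.of fun i j : Fin m => W (a, i) (b, j)) *ᵥ fun j => q (b, j)) ⬝ᵥ
              ((Matrix.of fun i j : Fin m => W (a, i) (b, j)) *ᵥ fun j => q (b, j))) :=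
            dot_le_sqrt _ _
        _ = _ := by rw [orth_dot _ (hW a b)]
    calc u ⬝ᵥ ((Xhat * W * Xhatᵀ) *ᵥ v) = p ⬝ᵥ (W *ᵥ q) := hrw
      _ = ∑ a, ∑ b, (fun i => p (a, i)) ⬝ᵥ
            ((Matrix.of fun i j : Fin m => W (a, i) (b, j)) *ᵥ fun j => q (b, j)) := expand
      _ ≤ ∑ a, ∑ b, Real.sqrt ((fun i => p (a, i)) ⬝ᵥ fun i => p (a, i)) *
            Real.sqrt ((fun j => q (b, j)) ⬝ᵥ fun j => q (b, j)) :=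
          Finset.sum_le_sum fun a _ => Finset.sum_le_sum fun b _ => termbd a b
      _ = (∑ a, Real.sqrt ((fun i => p (a, i)) ⬝ᵥ fun i => p (a, i))) *
            ∑ b, Real.sqrt ((fun j => q (b, j)) ⬝ᵥ fun j => q (b, j)) := by
          rw [Finset.sum_mul_sum]
      _ ≤ (Real.sqrt S * Real.sqrt (u ⬝ᵥ u)) * (Real.sqrt S * Real.sqrt (v ⬝ᵥ v)) := by
          refine mul_le_mul (sum_blocks_le u) (sum_blocks_le v)
            (Finset.sum_nonneg fun b _ => Real.sqrt_nonneg _)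
            (mul_nonneg (Real.sqrt_nonneg _) (Real.sqrt_nonneg _))
      _ = S * (Real.sqrt (u ⬝ᵥ u) * Real.sqrt (v ⬝ᵥ v)) := by
          rw [show (Real.sqrt S * Real.sqrt (u ⬝ᵥ u)) * (Real.sqrt S * Real.sqrt (v ⬝ᵥ v)) =
            (Real.sqrt S * Real.sqrt S) * (Real.sqrt (u ⬝ᵥ u) * Real.sqrt (v ⬝ᵥ v)) by ring,
            Real.mul_self_sqrt hS0]
  -- conclude via the operator norm characterization
  rw [Matrix.l2_opNorm_def]
  refine ContinuousLinearMap.opNorm_le_bound _ hS0 fun x => ?_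
  set x0 : ((l : Fin k) × Fin (n l)) → ℝ := WithLp.equiv 2 (((l : Fin k) × Fin (n l)) → ℝ) x with hx0
  set y : ((l : Fin k) × Fin (n l)) → ℝ := (Xhat * W * Xhatᵀ) *ᵥ x0 with hy
  have hfx : ‖(Matrix.toEuclideanLin.trans LinearMap.toContinuousLinearMap)
      (Xhat * W * Xhatᵀ) x‖ = Real.sqrt (y ⬝ᵥ y) := by
    rw [show ((Matrix.toEuclideanLin.trans LinearMap.toContinuousLinearMap)
      (Xhat * W * Xhatᵀ) x) = (WithLp.equiv 2 (((l : Fin k) × Fin (n l)) → ℝ)).symm y from rfl, norm_euclidean]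
  have hxn : ‖x‖ = Real.sqrt (x0 ⬝ᵥ x0) := by
    rw [show x = (WithLp.equiv 2 (((l : Fin k) × Fin (n l)) → ℝ)).symm x0 from rfl, norm_euclidean]
  rw [hfx, hxn]
  rcases eq_or_lt_of_le (Real.sqrt_nonneg (y ⬝ᵥ y)) with h0 | h0
  · rw [← h0]
    positivity
  · have h1 : Real.sqrt (y ⬝ᵥ y) * Real.sqrt (y ⬝ᵥ y) ≤
        (S * Real.sqrt (x0 ⬝ᵥ x0)) * Real.sqrt (y ⬝ᵥ y) := by
      rw [Real.mul_self_sqrt (dotSelf_nonneg y)]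
      calc y ⬝ᵥ y = y ⬝ᵥ ((Xhat * W * Xhatᵀ) *ᵥ x0) := rfl
        _ ≤ S * (Real.sqrt (y ⬝ᵥ y) * Real.sqrt (x0 ⬝ᵥ x0)) := key y x0
        _ = (S * Real.sqrt (x0 ⬝ᵥ x0)) * Real.sqrt (y ⬝ᵥ y) := by ring
    exact le_of_mul_le_mul_right h1 h0
end

section
/- Let x and y be independent standard Gaussian vectors in R^m and Ψ a fixed m×m matrix. For t ≥ 0, with probability at least 1 - 2 max{e^{-mt/8}, e^{-mt^2/8}}, one has x^T Ψ y ≤ m sqrt(t(1+t)) ||Ψ||. -/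
open scoped BigOperators Matrix Matrix.Norms.L2Operator
open MeasureTheory ProbabilityTheory

open Real


lemma pdf_shift (c x : ℝ) :
    (gaussianPDFReal 0 1 x).toNNReal • rexp (c * x) = rexp (c^2/2) * gaussianPDFReal c 1 x := by
  rw [NNReal.smul_def, smul_eq_mul, Real.coe_toNNReal _ (gaussianPDFReal_nonneg 0 1 x)]
  simp only [gaussianPDFReal, NNReal.coe_one, mul_one, sub_zero]
  rw [mul_assoc, ← Real.exp_add, mul_comm (rexp (c^2/2)), mul_assoc, ← Real.exp_add]
  ring_nf

lemma gaussianReal_eq_wd :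
    gaussianReal 0 1 = volume.withDensity (fun x => ((gaussianPDFReal 0 1 x).toNNReal : ENNReal)) :=
  gaussianReal_of_var_ne_zero 0 one_ne_zero

lemma meas_pdf_nnreal : Measurable (fun x => (gaussianPDFReal 0 1 x).toNNReal) :=
  (measurable_gaussianPDFReal 0 1).real_toNNReal

lemma integral_pdf_one (c : ℝ) : ∫ x, gaussianPDFReal c 1 x = 1 := by
  have h := lintegral_gaussianPDFReal_eq_one c one_ne_zero
  rw [← ofReal_integral_eq_lintegral_ofReal (integrable_gaussianPDFReal c 1)
    (ae_of_all _ (gaussianPDFReal_nonneg c 1))] at h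
  have h2 := ENNReal.toReal_eq_one_iff _ |>.2 h
  rwa [ENNReal.toReal_ofReal (integral_nonneg (gaussianPDFReal_nonneg c 1))] at h2

lemma integrable_exp_mul_gauss (c : ℝ) :
    Integrable (fun x => rexp (c * x)) (gaussianReal 0 1) := by
  rw [gaussianReal_eq_wd, integrable_withDensity_iff_integrable_smul meas_pdf_nnreal]
  have : (fun x => (gaussianPDFReal 0 1 x).toNNReal • rexp (c * x))
      = fun x => rexp (c^2/2) * gaussianPDFReal c 1 x := funext fun x => pdf_shift c x
  rw [this]
  exact (integrable_gaussianPDFReal c 1).const_mul _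

lemma integral_exp_mul_gauss (c : ℝ) :
    ∫ x, rexp (c * x) ∂(gaussianReal 0 1) = rexp (c^2/2) := by
  rw [gaussianReal_eq_wd, integral_withDensity_eq_integral_smul meas_pdf_nnreal]
  simp_rw [pdf_shift]
  rw [integral_const_mul, integral_pdf_one, mul_one]

lemma pdf_sq (l x : ℝ) :
    (gaussianPDFReal 0 1 x).toNNReal • rexp (l * x^2)
      = (√(2*π))⁻¹ * rexp (-(1/2 - l) * x^2) := by
  rw [NNReal.smul_def, smul_eq_mul, Real.coe_toNNReal _ (gaussianPDFReal_nonneg 0 1 x)]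
  simp only [gaussianPDFReal, NNReal.coe_one, mul_one, sub_zero]
  rw [mul_assoc, ← Real.exp_add]
  ring_nf

lemma integrable_exp_sq_gauss {l : ℝ} (hl : l < 1/2) :
    Integrable (fun x => rexp (l * x^2)) (gaussianReal 0 1) := by
  rw [gaussianReal_eq_wd, integrable_withDensity_iff_integrable_smul meas_pdf_nnreal]
  have : (fun x => (gaussianPDFReal 0 1 x).toNNReal • rexp (l * x^2))
      = fun x => (√(2*π))⁻¹ * rexp (-(1/2 - l) * x^2) := funext fun x => pdf_sq l x
  rw [this]
  exact (integrable_exp_neg_mul_sq (by linarith)).const_mul _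

lemma integral_exp_sq_gauss {l : ℝ} (hl : l < 1/2) :
    ∫ x, rexp (l * x^2) ∂(gaussianReal 0 1) = (√(2*π))⁻¹ * √(π / (1/2 - l)) := by
  rw [gaussianReal_eq_wd, integral_withDensity_eq_integral_smul meas_pdf_nnreal]
  simp_rw [pdf_sq]
  rw [integral_const_mul, integral_gaussian]

lemma exp_quad_lower {v : ℝ} (hv : 0 ≤ v) : 1 + v + v^2/2 ≤ rexp v := by
  have h := Real.sum_le_exp_of_nonneg hv 3
  simp [Finset.sum_range_succ] at h
  linarith [h]

lemma core_ineq {l : ℝ} (h0 : 0 ≤ l) (h1 : l ≤ 1/4) :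
    1 / (1 - 2*l) ≤ rexp (2*l + 4*l^2) := by
  have hu : (0:ℝ) < 1 - 2*l := by linarith
  have hexp := exp_quad_lower (v := 2*l + (2*l)^2) (by nlinarith)
  rw [div_le_iff₀ hu]
  have : 2*l + 4*l^2 = 2*l + (2*l)^2 := by ring
  rw [this]
  nlinarith [Real.exp_pos (2*l + (2*l)^2), sq_nonneg l, sq_nonneg (2*l), mul_nonneg h0 h0]

lemma integral_exp_sq_gauss_le {l : ℝ} (h0 : 0 ≤ l) (h1 : l ≤ 1/4) :
    ∫ x, rexp (l * x^2) ∂(gaussianReal 0 1) ≤ rexp (l + 2*l^2) := by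
  rw [integral_exp_sq_gauss (by linarith : l < 1/2)]
  have hb : (0:ℝ) < 1/2 - l := by linarith
  have h2pi : (0:ℝ) < 2*π := by positivity
  have hval : (√(2*π))⁻¹ * √(π / (1/2 - l)) = √(1 / (1 - 2*l)) := by
    rw [← Real.sqrt_inv, ← Real.sqrt_mul (by positivity)]
    congr 1
    have h1' : (1:ℝ)/2 - l ≠ 0 := hb.ne'
    have h2' : (1:ℝ) - 2*l ≠ 0 := by linarith
    field_simp
  rw [hval]
  have h3 : √(1 / (1 - 2*l)) ≤ √(rexp (2*l + 4*l^2)) :=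
    Real.sqrt_le_sqrt (core_ineq h0 h1)
  refine h3.trans_eq ?_
  rw [show (2*l + 4*l^2) = (l + 2*l^2) + (l + 2*l^2) by ring, Real.exp_add,
    ← sq, Real.sqrt_sq (Real.exp_pos _).le]

section
noncomputable local instance gaussSpace : MeasureSpace ℝ := ⟨gaussianReal 0 1⟩

local instance : SigmaFinite (volume : Measure ℝ) :=
  inferInstanceAs (SigmaFinite (gaussianReal 0 1))

lemma pi_chernoff_linear {m : ℕ} (a : Fin m → ℝ) {l : ℝ} (hl : 0 ≤ l) (ε : ℝ) :
    ((Measure.pi fun _ : Fin m => gaussianReal 0 1) {x | ε ≤ ∑ i, x i * a i}).toReal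
      ≤ rexp (-l * ε + l^2 * (∑ i, (a i)^2) / 2) := by
  have hprod : ∀ x : Fin m → ℝ, rexp (l * ∑ i, x i * a i) = ∏ i, rexp ((l * a i) * x i) := by
    intro x
    rw [← Real.exp_sum, Finset.mul_sum]
    congr 1
    exact Finset.sum_congr rfl fun i _ => by ring
  have hint : Integrable (fun x : Fin m → ℝ => rexp (l * ∑ i, x i * a i))
      (Measure.pi fun _ => gaussianReal 0 1) := by
    simp_rw [hprod]
    exact MeasureTheory.Integrable.fintype_prod (f := fun i s => rexp ((l * a i) * s))
      (fun i => integrable_exp_mul_gauss _)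
  have h := measure_ge_le_exp_mul_mgf (X := fun x : Fin m → ℝ => ∑ i, x i * a i)
      (μ := Measure.pi fun _ => gaussianReal 0 1) ε hl hint
  refine h.trans ?_
  unfold mgf
  have hval : ∫ x : Fin m → ℝ, rexp (l * ∑ i, x i * a i) ∂(Measure.pi fun _ => gaussianReal 0 1)
      = ∏ i, rexp ((l * a i)^2 / 2) := by
    simp_rw [hprod]
    rw [MeasureTheory.integral_fintype_prod_eq_prod (ι := Fin m)
      (f := fun i s => rexp ((l * a i) * s))]
    exact Finset.prod_congr rfl fun i _ => integral_exp_mul_gauss _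
  rw [hval, ← Real.exp_sum, ← Real.exp_add]
  apply le_of_eq
  congr 1
  simp_rw [mul_pow]
  rw [← Finset.sum_div, ← Finset.mul_sum]

lemma pi_chernoff_sq {m : ℕ} {l : ℝ} (h0 : 0 ≤ l) (h1 : l ≤ 1/4) (ε : ℝ) :
    ((Measure.pi fun _ : Fin m => gaussianReal 0 1) {x | ε ≤ ∑ i, (x i)^2}).toReal
      ≤ rexp (-l * ε + m * (l + 2*l^2)) := by
  have hprod : ∀ x : Fin m → ℝ, rexp (l * ∑ i, (x i)^2) = ∏ i, rexp (l * (x i)^2) := by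
    intro x
    rw [← Real.exp_sum, Finset.mul_sum]
  have hint : Integrable (fun x : Fin m → ℝ => rexp (l * ∑ i, (x i)^2))
      (Measure.pi fun _ => gaussianReal 0 1) := by
    simp_rw [hprod]
    exact MeasureTheory.Integrable.fintype_prod (f := fun _ s => rexp (l * s^2))
      (fun i => integrable_exp_sq_gauss (by linarith))
  have h := measure_ge_le_exp_mul_mgf (X := fun x : Fin m → ℝ => ∑ i, (x i)^2)
      (μ := Measure.pi fun _ => gaussianReal 0 1) ε h0 hint
  refine h.trans ?_
  unfold mgf
  rw [Real.exp_add]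
  apply mul_le_mul_of_nonneg_left _ (Real.exp_pos _).le
  have hval : ∫ x : Fin m → ℝ, rexp (l * ∑ i, (x i)^2) ∂(Measure.pi fun _ => gaussianReal 0 1)
      = (∫ s : ℝ, rexp (l * s^2) ∂(gaussianReal 0 1)) ^ m := by
    simp_rw [hprod]
    rw [MeasureTheory.integral_fintype_prod_eq_pow (ι := Fin m) (fun s => rexp (l * s^2))]
    norm_num
  rw [hval]
  calc (∫ s : ℝ, rexp (l * s^2) ∂(gaussianReal 0 1)) ^ m
      ≤ (rexp (l + 2*l^2)) ^ m := by
        have hb := integral_exp_sq_gauss_le h0 h1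
        have hnn : 0 ≤ ∫ s : ℝ, rexp (l * s^2) ∂(gaussianReal 0 1) :=
          integral_nonneg fun s => (Real.exp_pos _).le
        exact pow_le_pow_left₀ hnn hb m
    _ = rexp (m * (l + 2*l^2)) := by rw [← Real.exp_nat_mul]

end

lemma chi_sq_tail {m : ℕ} {t : ℝ} (ht : 0 ≤ t) :
    ((Measure.pi fun _ : Fin m => gaussianReal 0 1) {y | (m:ℝ)*(1+t) ≤ ∑ i, (y i)^2}).toReal
      ≤ max (rexp (-(m:ℝ)*t/8)) (rexp (-(m:ℝ)*t^2/8)) := by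
  rcases le_total t 1 with h1 | h1
  · refine le_trans (pi_chernoff_sq (l := t/4) (by linarith) (by linarith) _) ?_
    refine le_trans ?_ (le_max_right _ _)
    rw [Real.exp_le_exp]
    have hm : (0:ℝ) ≤ m := Nat.cast_nonneg m
    nlinarith [sq_nonneg t]
  · refine le_trans (pi_chernoff_sq (l := (1:ℝ)/4) (by norm_num) (by norm_num) _) ?_
    refine le_trans ?_ (le_max_left _ _)
    rw [Real.exp_le_exp]
    have hm : (0:ℝ) ≤ m := Nat.cast_nonneg m
    nlinarith


lemma mulVec_sq_sum_le {m : ℕ} (Psi : Matrix (Fin m) (Fin m) ℝ) (y : Fin m → ℝ) :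
    ∑ i, ((Psi *ᵥ y) i)^2 ≤ ‖Psi‖^2 * ∑ i, (y i)^2 := by
  have hmv := Psi.l2_opNorm_mulVec ((WithLp.equiv 2 (Fin m → ℝ)).symm y)
  rw [EuclideanSpace.norm_eq, EuclideanSpace.norm_eq] at hmv
  simp only [WithLp.equiv_symm_apply, PiLp.toLp_apply, Real.norm_eq_abs, sq_abs] at hmv
  have hre : ∀ x, ((EuclideanSpace.equiv (Fin m) ℝ).symm
      (Psi *ᵥ y)).ofLp x = (Psi *ᵥ y) x := fun _ => rfl
  simp only [hre] at hmv
  have h1 : (0:ℝ) ≤ ∑ i, ((Psi *ᵥ y) i)^2 := Finset.sum_nonneg fun i _ => sq_nonneg _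
  have h2 : (0:ℝ) ≤ ∑ i, (y i)^2 := Finset.sum_nonneg fun i _ => sq_nonneg _
  have h3 := mul_self_le_mul_self (Real.sqrt_nonneg _) hmv
  rw [Real.mul_self_sqrt h1] at h3
  calc ∑ i, ((Psi *ᵥ y) i)^2 ≤ (‖Psi‖ * √(∑ i, (y i)^2)) * (‖Psi‖ * √(∑ i, (y i)^2)) := h3
    _ = ‖Psi‖^2 * (√(∑ i, (y i)^2) * √(∑ i, (y i)^2)) := by ring
    _ = ‖Psi‖^2 * ∑ i, (y i)^2 := by rw [Real.mul_self_sqrt h2]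



/-- For independent standard Gaussian vectors `x, y` in `ℝ^m` and a fixed matrix `Ψ`,
with probability at least `1 - 2 max{e^{-mt/8}, e^{-mt²/8}}` one has
`xᵀ Ψ y ≤ m √(t(1+t)) ‖Ψ‖`: equivalently, the probability of the complementary event
is at most `2 max{e^{-mt/8}, e^{-mt²/8}}`. -/
theorem gaussian_bilinear_form_tail_bound
    {m : ℕ} (Psi : Matrix (Fin m) (Fin m) ℝ)
    (μ : Measure (Fin m → ℝ)) (hμ : μ = Measure.pi fun _ => gaussianReal 0 1)
    (t : ℝ) (ht : 0 ≤ t) :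
    ((μ.prod μ) {p | (m : ℝ) * Real.sqrt (t * (1 + t)) * ‖Psi‖ < p.1 ⬝ᵥ (Psi *ᵥ p.2)}).toReal
      ≤ 2 * max (Real.exp (-(m : ℝ) * t / 8)) (Real.exp (-(m : ℝ) * t ^ 2 / 8)) := by
  subst hμ
  set ν : Measure (Fin m → ℝ) := Measure.pi fun _ => gaussianReal 0 1 with hν
  haveI : IsProbabilityMeasure ν := by rw [hν]; infer_instance
  set Mx : ℝ := max (rexp (-(m:ℝ)*t/8)) (rexp (-(m:ℝ)*t^2/8)) with hMx
  have hMxpos : 0 < Mx := lt_max_of_lt_left (Real.exp_pos _)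
  set R : ℝ := (m:ℝ) * √(t*(1+t)) * ‖Psi‖ with hR
  set S : Set ((Fin m → ℝ) × (Fin m → ℝ)) := {p | R < p.1 ⬝ᵥ (Psi *ᵥ p.2)} with hS
  by_cases htriv : 1 ≤ 2 * Mx
  · have h1 : ((ν.prod ν) S).toReal ≤ 1 := by
      simpa using ENNReal.toReal_mono ENNReal.one_ne_top prob_le_one
    linarith
  push_neg at htriv
  have hmt : 0 < (m:ℝ)*t := by
    by_contra h
    push_neg at h
    have h0 : (m:ℝ)*t = 0 := le_antisymm h (mul_nonneg (Nat.cast_nonneg m) ht)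
    have he : rexp (-(m:ℝ)*t/8) = 1 := by
      rw [show -(m:ℝ)*t/8 = -((m:ℝ)*t)/8 by ring, h0]
      norm_num
    have hgel : rexp (-(m:ℝ)*t/8) ≤ Mx := by rw [hMx]; exact le_max_left _ _
    rw [he] at hgel
    linarith
  have hm0 : 0 < (m:ℝ) := by nlinarith [Nat.cast_nonneg (α := ℝ) m]
  have ht0 : 0 < t := by nlinarith [Nat.cast_nonneg (α := ℝ) m]
  by_cases hPsi : ‖Psi‖ = 0
  · have hP0 : Psi = 0 := norm_eq_zero.mp hPsi
    have hempty : S = ∅ := by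
      ext p
      simp [hS, hR, hP0, Matrix.zero_mulVec, dotProduct_zero]
    rw [hempty]
    simp only [measure_empty, ENNReal.toReal_zero]
    positivity
  have hPsipos : 0 < ‖Psi‖ := lt_of_le_of_ne (norm_nonneg _) (Ne.symm hPsi)
  have hRpos : 0 < R := by
    rw [hR]
    have : 0 < t*(1+t) := by nlinarith
    positivity
  set A : Set (Fin m → ℝ) := {y | ∑ i, (y i)^2 ≤ (m:ℝ)*(1+t)} with hA
  have hAmeas : MeasurableSet A := by
    apply measurableSet_le _ measurable_const
    exact Finset.measurable_sum _ fun i _ => (measurable_pi_apply i).pow_const 2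
  have hdotmeas : Measurable fun p : (Fin m → ℝ) × (Fin m → ℝ) => p.1 ⬝ᵥ (Psi *ᵥ p.2) := by
    simp only [dotProduct, Matrix.mulVec]
    apply Finset.measurable_sum
    intro i _
    apply Measurable.mul
    · exact (measurable_pi_apply i).comp measurable_fst
    · apply Finset.measurable_sum
      intro j _
      exact ((measurable_pi_apply j).comp measurable_snd).const_mul _
  have hSmeas : MeasurableSet S := measurableSet_lt measurable_const hdotmeas
  set E := S ∩ {p | p.2 ∈ A} with hE
  have hEmeas : MeasurableSet E := hSmeas.inter (hAmeas.preimage measurable_snd)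
  have hsplit : (ν.prod ν) S ≤ (ν.prod ν) E + (ν.prod ν) {p | p.2 ∈ Aᶜ} := by
    refine le_trans (measure_mono ?_) (measure_union_le _ _)
    intro p hp
    by_cases hpA : p.2 ∈ A
    · exact Or.inl ⟨hp, hpA⟩
    · exact Or.inr hpA
  have hpart2 : (ν.prod ν) {p | p.2 ∈ Aᶜ} ≤ ENNReal.ofReal Mx := by
    have hprodset : {p : (Fin m → ℝ) × (Fin m → ℝ) | p.2 ∈ Aᶜ} = Set.univ ×ˢ Aᶜ := by
      ext p; simp [Set.mem_prod]
    rw [hprodset, Measure.prod_prod, measure_univ, one_mul]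
    rw [ENNReal.le_ofReal_iff_toReal_le (measure_ne_top _ _) hMxpos.le]
    refine le_trans (ENNReal.toReal_mono (measure_ne_top _ _) (measure_mono ?_))
      (chi_sq_tail (m := m) ht)
    intro y hy
    simp only [hA, Set.mem_compl_iff, Set.mem_setOf_eq, not_le] at hy ⊢
    exact hy.le
  have hsec : ∀ y : Fin m → ℝ, ν {x | (x, y) ∈ E} ≤ ENNReal.ofReal (rexp (-((m:ℝ)*t)/2)) := by
    intro y
    by_cases hy : y ∈ A
    · have hsub : {x : Fin m → ℝ | (x, y) ∈ E} ⊆ {x | R ≤ ∑ i, x i * (Psi *ᵥ y) i} := by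
        intro x hx
        have h1 : R < x ⬝ᵥ (Psi *ᵥ y) := hx.1
        exact h1.le
      rw [ENNReal.le_ofReal_iff_toReal_le (measure_ne_top _ _) (Real.exp_pos _).le]
      refine le_trans (ENNReal.toReal_mono (measure_ne_top _ _) (measure_mono hsub)) ?_
      set D : ℝ := (m:ℝ)*(1+t)*‖Psi‖^2 with hD
      have hDpos : 0 < D := by rw [hD]; positivity
      have hl : 0 ≤ R / D := div_nonneg hRpos.le hDpos.le
      refine le_trans (pi_chernoff_linear (Psi *ᵥ y) hl R) ?_
      rw [Real.exp_le_exp]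
      have hyA : ∑ i, (y i)^2 ≤ (m:ℝ)*(1+t) := hy
      have hsum : ∑ i, ((Psi *ᵥ y) i)^2 ≤ D := by
        refine le_trans (mulVec_sq_sum_le Psi y) ?_
        rw [hD]
        nlinarith [sq_nonneg ‖Psi‖]
      have hstep : -(R/D) * R + (R/D)^2 * (∑ i, ((Psi *ᵥ y) i)^2) / 2
          ≤ -(R/D)*R + (R/D)^2 * D / 2 := by
        have := mul_le_mul_of_nonneg_left hsum (sq_nonneg (R/D))
        linarith
      refine hstep.trans ?_
      have hR2 : R^2 = (m:ℝ)^2 * (t*(1+t)) * ‖Psi‖^2 := by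
        rw [hR, mul_pow, mul_pow, Real.sq_sqrt (by nlinarith)]
      have hfin : -(R/D)*R + (R/D)^2 * D / 2 = -((m:ℝ)*t)/2 := by
        have h1 : -(R/D)*R + (R/D)^2 * D / 2 = -(R^2/D)/2 := by
          field_simp
          ring
        rw [h1, hR2, hD]
        have h1t : (1:ℝ)+t ≠ 0 := by nlinarith
        field_simp
      rw [hfin]
    · have hempty : {x : Fin m → ℝ | (x, y) ∈ E} = ∅ := by
        ext x
        simp only [hE, Set.mem_inter_iff, Set.mem_setOf_eq, Set.mem_empty_iff_false, iff_false,
          not_and]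
        intro _
        exact hy
      rw [hempty]
      simp
  have hpart3 : (ν.prod ν) E ≤ ENNReal.ofReal (rexp (-((m:ℝ)*t)/2)) := by
    have hswap : (ν.prod ν) E = ∫⁻ y, ν {x | (x, y) ∈ E} ∂ν := by
      conv_lhs => rw [← Measure.prod_swap]
      rw [Measure.map_apply measurable_swap hEmeas,
        Measure.prod_apply (hEmeas.preimage measurable_swap)]
      rfl
    rw [hswap]
    calc ∫⁻ y, ν {x | (x, y) ∈ E} ∂ν
        ≤ ∫⁻ _, ENNReal.ofReal (rexp (-((m:ℝ)*t)/2)) ∂ν := lintegral_mono hsec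
      _ = ENNReal.ofReal (rexp (-((m:ℝ)*t)/2)) := by
          rw [lintegral_const, measure_univ, mul_one]
  have htot : (ν.prod ν) S ≤ ENNReal.ofReal (rexp (-((m:ℝ)*t)/2)) + ENNReal.ofReal Mx :=
    hsplit.trans (add_le_add hpart3 hpart2)
  calc ((ν.prod ν) S).toReal
      ≤ (ENNReal.ofReal (rexp (-((m:ℝ)*t)/2)) + ENNReal.ofReal Mx).toReal :=
        ENNReal.toReal_mono (by finiteness) htot
    _ = rexp (-((m:ℝ)*t)/2) + Mx := by
        rw [ENNReal.toReal_add ENNReal.ofReal_ne_top ENNReal.ofReal_ne_top,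
          ENNReal.toReal_ofReal (Real.exp_pos _).le, ENNReal.toReal_ofReal hMxpos.le]
    _ ≤ Mx + Mx := by
        have hee : rexp (-((m:ℝ)*t)/2) ≤ rexp (-(m:ℝ)*t/8) := by
          rw [Real.exp_le_exp]
          nlinarith
        have h2 := le_max_left (rexp (-(m:ℝ)*t/8)) (rexp (-(m:ℝ)*t^2/8))
        rw [← hMx] at h2
        linarith
    _ = 2 * Mx := by ring
end
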